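/- A map f : ℤ → D is an increasing bijection from (ℤ, <) to (D, ≺) with f(0) = the single-letter word 0, if and only if f = rep_Fc, the Fibonacci's complement representation map (the inverse of val_Fc). -/
import Mathlib


/-- Fibonacci sequence with F 0 = 1, F 1 = 2. -/
def F (n : ℕ) : ℕ := Nat.fib (n + 2)

/-- Fibonacci extended to integer indices ≥ -2, with F_{-2} = 0, F_{-1} = 1. -/
def Fz (m : ℤ) : ℤ := ((m + 2).toNat.fib : ℤ)

/-- Fibonacci value of a word (most significant digit first):
`valF (w_{k-1} ⋯ w_0) = ∑ w_i F_i`. -/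
def valF : List ℕ → ℕ
  | [] => 0
  | a :: t => a * F t.length + valF t

/-- Fibonacci's complement value:
`valFc (w_{k-1} ⋯ w_0) = ∑ w_i F_i − w_{k-1} F_k`. -/
def valFc (w : List ℕ) : ℤ :=
  (valF w : ℤ) - (w.headD 0 : ℤ) * (F w.length : ℤ)

/-- The domain D of the Fibonacci's complement numeration system. -/
def inD (w : List ℕ) : Prop :=
  (∀ x ∈ w, x ≤ 1) ∧ Odd w.length ∧ ¬ [1, 1] <:+: w ∧
    ¬ [0, 0, 0] <+: w ∧ ¬ [1, 0, 1] <+: w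

/-- Radix order: shorter words first, ties broken lexicographically. -/
def radLt (u v : List ℕ) : Prop :=
  u.length < v.length ∨ (u.length = v.length ∧ List.Lex (· < ·) u v)

/-- Reverse-radix order: longer words first, ties broken lexicographically. -/
def revLt (u v : List ℕ) : Prop :=
  v.length < u.length ∨ (u.length = v.length ∧ List.Lex (· < ·) u v)

/-- The total order ≺. -/
def precLt (u v : List ℕ) : Prop :=
  (u.headD 0 = 1 ∧ v.headD 0 = 0) ∨
  (u.headD 0 = 0 ∧ v.headD 0 = 0 ∧ radLt u v) ∨
  (u.headD 0 = 1 ∧ v.headD 0 = 1 ∧ revLt u v)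

-- basic F lemmas
lemma F_add_two (n : ℕ) : F (n + 2) = F (n + 1) + F n := by
  show Nat.fib (n + 2 + 2) = Nat.fib (n + 1 + 2) + Nat.fib (n + 2)
  rw [Nat.fib_add_two, show n + 1 + 2 = n + 2 + 1 from rfl]
  omega

lemma F_strictMono : StrictMono F := Nat.fib_add_two_strictMono
lemma F_mono : Monotone F := F_strictMono.monotone
lemma F_pos (n : ℕ) : 0 < F n := Nat.fib_pos.2 (by omega)

lemma le_F (n : ℕ) : n + 1 ≤ F n := by
  induction n using Nat.twoStepInduction with
  | zero => decide
  | one => decide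
  | more n ih _ => rw [F_add_two]; have := F_pos (n+1); have := ih; omega

def GoodW (w : List ℕ) : Prop := (∀ x ∈ w, x ≤ 1) ∧ ¬ [1, 1] <:+: w

lemma GoodW.tail {a : ℕ} {t : List ℕ} (h : GoodW (a :: t)) : GoodW t := by
  obtain ⟨h1, h2⟩ := h
  exact ⟨fun x hx => h1 x (by simp [hx]), fun hc => h2 (List.infix_cons_iff.2 (Or.inr hc))⟩

lemma valF_lt : ∀ (w : List ℕ), GoodW w → valF w < F w.length
  | [], _ => by simpa [valF] using F_pos 0
  | 0 :: t, h => by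
      have ht := valF_lt t h.tail
      simp only [valF, List.length_cons, Nat.zero_mul, Nat.zero_add]
      exact lt_of_lt_of_le ht (F_mono (by omega))
  | 1 :: [], _ => by decide
  | 1 :: 0 :: s, h => by
      have hs := valF_lt s h.tail.tail
      simp only [valF, List.length_cons, Nat.one_mul, Nat.zero_mul, Nat.zero_add,
        show ∀ m : ℕ, m + 1 + 1 = m + 2 from fun m => rfl]
      have h1 := F_add_two s.length
      omega
  | 1 :: (b+1) :: s, h => by
      exfalso
      have hb : b + 1 ≤ 1 := h.1 (b+1) (by simp)
      have hb0 : b = 0 := by omega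
      subst hb0
      exact h.2 (List.infix_cons_iff.2 (Or.inl (by simp [List.cons_prefix_cons])))
  | (a+2) :: t, h => by
      exfalso; exact absurd (h.1 (a+2) (by simp)) (by omega)
-- lex order vs value
lemma valF_lt_of_lex : ∀ (u v : List ℕ), GoodW u → GoodW v → u.length = v.length →
    List.Lex (· < ·) u v → valF u < valF v := by
  intro u v hu hv hlen hlex
  induction hlex with
  | nil => simp at hlen
  | @rel a l₁ b l₂ hab =>
      have ha : a = 0 := by have := hu.1 a (by simp); have := hv.1 b (by simp); omega
      have hb : b = 1 := by have := hu.1 a (by simp); have := hv.1 b (by simp); omega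
      subst ha; subst hb
      simp only [valF, Nat.zero_mul, Nat.zero_add, Nat.one_mul]
      have h1 := valF_lt l₁ hu.tail
      have h2 : l₁.length = l₂.length := by simpa using hlen
      rw [h2] at h1
      omega
  | @cons a l₁ l₂ _ ih =>
      have h2 : l₁.length = l₂.length := by simpa using hlen
      have := ih hu.tail hv.tail h2
      simp only [valF, List.length_cons, h2]
      omega

lemma lex_trichotomy : ∀ (u v : List ℕ), u = v ∨ List.Lex (· < ·) u v ∨ List.Lex (· < ·) v u := by
  intro u
  induction u with
  | nil => intro v; cases v with
    | nil => exact Or.inl rfl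
    | cons b t => exact Or.inr (Or.inl List.Lex.nil)
  | cons a s ih =>
    intro v
    cases v with
    | nil => exact Or.inr (Or.inr List.Lex.nil)
    | cons b t =>
      rcases lt_trichotomy a b with h | h | h
      · exact Or.inr (Or.inl (List.Lex.rel h))
      · subst h
        rcases ih t with h | h | h
        · exact Or.inl (by rw [h])
        · exact Or.inr (Or.inl (List.Lex.cons h))
        · exact Or.inr (Or.inr (List.Lex.cons h))
      · exact Or.inr (Or.inr (List.Lex.rel h))

-- Zeckendorf representation
def zeck : ℕ → ℕ → List ℕ
  | 0, _ => []
  | m + 1, n => if n < F m then 0 :: zeck m n else 1 :: zeck m (n - F m)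

lemma zeck_length : ∀ m n, (zeck m n).length = m
  | 0, _ => rfl
  | m + 1, n => by
      simp only [zeck]
      split <;> simp [zeck_length m]

lemma zeck_spec : ∀ m n, n < F m →
    GoodW (zeck m n) ∧ valF (zeck m n) = n := by
  intro m
  induction m with
  | zero =>
      intro n hn
      have hF0 : F 0 = 1 := by decide
      have : n = 0 := by omega
      subst this
      exact ⟨⟨by simp [zeck], by simp [zeck]⟩, by simp [zeck, valF]⟩
  | succ m ih =>
      intro n hn
      by_cases h : n < F m
      · obtain ⟨⟨hd, hinf⟩, hval⟩ := ih n h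
        have hz : zeck (m+1) n = 0 :: zeck m n := by simp [zeck, h]
        rw [hz]
        refine ⟨⟨?_, ?_⟩, ?_⟩
        · intro x hx; rcases List.mem_cons.1 hx with h'|h'; · omega
          exact hd x h'
        · intro hc
          rcases List.infix_cons_iff.1 hc with h'|h'
          · rw [List.cons_prefix_cons] at h'; omega
          · exact hinf h'
        · simp [valF, hval, zeck_length]
      · have hz : zeck (m+1) n = 1 :: zeck m (n - F m) := by simp [zeck, h]
        have hlt : n - F m < F m := by
          rcases Nat.eq_zero_or_pos m with hm | hm
          · subst hm
            rw [show (0:ℕ) + 1 = 1 from rfl] at hn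
            have e1 : F 1 = 2 := by decide
            have e0 : F 0 = 1 := by decide
            omega
          · obtain ⟨k, hk⟩ := Nat.exists_eq_add_of_le hm
            have hrec : F (m + 1) = F m + F (m-1) := by
              have := F_add_two (m-1)
              have e1 : m - 1 + 2 = m + 1 := by omega
              have e2 : m - 1 + 1 = m := by omega
              rw [e1, e2] at this; omega
            have := F_mono (show m - 1 ≤ m by omega)
            omega
        obtain ⟨⟨hd, hinf⟩, hval⟩ := ih (n - F m) hlt
        -- head of tail is 0 when m ≥ 1
        have hhead : ∀ b t, zeck m (n - F m) = b :: t → b = 0 := by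
          intro b t hbt
          cases m with
          | zero => simp [zeck] at hbt
          | succ m' =>
            have hlt2 : n - F (m'+1) < F m' := by
              have hrec := F_add_two m'
              rw [show m' + 1 + 1 = m' + 2 from rfl] at hn
              omega
            simp only [zeck, if_pos hlt2] at hbt
            exact (List.cons.injEq _ _ _ _ ▸ hbt).1.symm
        rw [hz]
        refine ⟨⟨?_, ?_⟩, ?_⟩
        · intro x hx; rcases List.mem_cons.1 hx with h'|h'; · omega
          exact hd x h'
        · intro hc
          rcases List.infix_cons_iff.1 hc with h'|h'
          · rw [List.cons_prefix_cons] at h'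
            obtain ⟨-, h'⟩ := h'
            cases hzz : zeck m (n - F m) with
            | nil => rw [hzz] at h'; simp at h'
            | cons b t =>
              have := hhead b t hzz
              rw [hzz, List.cons_prefix_cons] at h'
              omega
          · exact hinf h'
        · simp only [valF, zeck_length, hval, Nat.one_mul]
          omega
lemma inD.good {u : List ℕ} (h : inD u) : GoodW u := ⟨h.1, h.2.2.1⟩

lemma inD_struct {u : List ℕ} (h : inD u) :
    (∃ t, u = 0 :: t) ∨ u = [1] ∨ (∃ s, u = 1 :: 0 :: 0 :: s) := by
  obtain ⟨hd, hodd, h11, h000, h101⟩ := h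
  cases u with
  | nil => simp at hodd
  | cons a t =>
    have ha : a ≤ 1 := hd a (by simp)
    interval_cases a
    · exact Or.inl ⟨t, rfl⟩
    · cases t with
      | nil => exact Or.inr (Or.inl rfl)
      | cons b t' =>
        have hb : b ≤ 1 := hd b (by simp)
        have hb0 : b = 0 := by
          rcases Nat.lt_or_ge b 1 with h'|h'
          · omega
          · exfalso
            have : b = 1 := by omega
            subst this
            exact h11 (List.infix_cons_iff.2 (Or.inl (by simp [List.cons_prefix_cons])))
        subst hb0
        cases t' with
        | nil => exact absurd hodd (by decide)
        | cons c s =>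
          have hc : c ≤ 1 := hd c (by simp)
          have hc0 : c = 0 := by
            rcases Nat.lt_or_ge c 1 with h'|h'
            · omega
            · exfalso
              have : c = 1 := by omega
              subst this
              exact h101 (by simp [List.cons_prefix_cons])
          subst hc0
          exact Or.inr (Or.inr ⟨s, rfl⟩)

lemma valFc_cons0 (t : List ℕ) : valFc (0 :: t) = (valF t : ℤ) := by
  simp [valFc, valF]

lemma valFc_one : valFc [1] = -1 := by decide

lemma valFc_100 (s : List ℕ) : valFc (1 :: 0 :: 0 :: s) = (valF s : ℤ) - F (s.length + 1) := by
  have h := F_add_two (s.length + 1)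
  rw [show s.length + 1 + 2 = s.length + 1 + 1 + 1 from rfl] at h
  simp only [valFc, valF, List.length_cons, List.headD]
  push_cast
  omega

lemma goodW_of_100 {s : List ℕ} (h : inD (1 :: 0 :: 0 :: s)) : GoodW s :=
  (((h.good).tail).tail).tail

lemma valFc_neg2_of_100 {s : List ℕ} (h : inD (1 :: 0 :: 0 :: s)) :
    valFc (1 :: 0 :: 0 :: s) ≤ -2 := by
  rw [valFc_100]
  have h1 := valF_lt s (goodW_of_100 h)
  have h2 := F_strictMono (show s.length < s.length + 1 by omega)
  omega

lemma valFc_neg_of_head1 {u : List ℕ} (hu : inD u) (h1 : u.headD 0 = 1) : valFc u ≤ -1 := by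
  rcases inD_struct hu with ⟨t, rfl⟩ | rfl | ⟨s, rfl⟩
  · simp at h1
  · rw [valFc_one]
  · have := valFc_neg2_of_100 hu; omega

lemma valFc_nonneg_of_head0 {u : List ℕ} (hu : inD u) (h0 : u.headD 0 = 0) : 0 ≤ valFc u := by
  rcases inD_struct hu with ⟨t, rfl⟩ | rfl | ⟨s, rfl⟩
  · rw [valFc_cons0]; positivity
  · simp at h0
  · simp at h0

lemma head0_lower {t : List ℕ} (h : inD (0 :: t)) (h2 : 2 ≤ t.length) :
    F (t.length - 2) ≤ valF t := by
  obtain ⟨hd, hodd, h11, h000, h101⟩ := h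
  cases t with
  | nil => simp at h2
  | cons a t' =>
    cases t' with
    | nil => simp at h2
    | cons b s =>
      have ha : a ≤ 1 := hd a (by simp)
      have hb : b ≤ 1 := hd b (by simp)
      interval_cases a
      · have hb1 : b = 1 := by
          rcases Nat.lt_or_ge b 1 with h'|h'
          · exfalso; have : b = 0 := by omega
            subst this
            exact h000 (by simp [List.cons_prefix_cons])
          · omega
        subst hb1
        simp only [valF, List.length_cons, Nat.zero_mul, Nat.one_mul, Nat.zero_add,
          show ∀ m : ℕ, m + 1 + 1 - 2 = m from fun m => rfl]
        omega
      · simp only [valF, List.length_cons, Nat.one_mul,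
          show ∀ m : ℕ, m + 1 + 1 - 2 = m from fun m => rfl]
        have := F_mono (show s.length ≤ s.length + 1 by omega)
        omega

lemma lex_cons_same {a : ℕ} {l₁ l₂ : List ℕ} (h : List.Lex (· < ·) (a :: l₁) (a :: l₂)) :
    List.Lex (· < ·) l₁ l₂ := by
  cases h with
  | cons h => exact h
  | rel h => exact absurd h (lt_irrefl a)

lemma inD_odd {u : List ℕ} (h : inD u) : Odd u.length := h.2.1
lemma valFc_lt_of_precLt {u v : List ℕ} (hu : inD u) (hv : inD v) (h : precLt u v) :
    valFc u < valFc v := by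
  rcases h with ⟨h1, h2⟩ | ⟨h1, h2, hrad⟩ | ⟨h1, h2, hrev⟩
  · have hb1 := valFc_neg_of_head1 hu h1
    have hb2 := valFc_nonneg_of_head0 hv h2
    omega
  · -- both head 0
    obtain ⟨t, rfl⟩ : ∃ t, u = 0 :: t := by
      rcases inD_struct hu with h'|rfl|⟨s, rfl⟩
      · exact h'
      · simp at h1
      · simp at h1
    obtain ⟨t', rfl⟩ : ∃ t', v = 0 :: t' := by
      rcases inD_struct hv with h'|rfl|⟨s, rfl⟩
      · exact h'
      · simp at h2
      · simp at h2
    rcases hrad with hlen | ⟨hlen, hlex⟩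
    · simp only [List.length_cons] at hlen
      have hodd1 := inD_odd hu
      have hodd2 := inD_odd hv
      simp only [List.length_cons] at hodd1 hodd2
      have hev : t.length % 2 = 0 ∧ t'.length % 2 = 0 := by
        rcases hodd1 with ⟨k, hk⟩; rcases hodd2 with ⟨k', hk'⟩
        omega
      have hle : t.length ≤ t'.length - 2 := by omega
      have hb1 : valF t < F t.length := valF_lt t (hu.good).tail
      have hb2 : F (t'.length - 2) ≤ valF t' := head0_lower hv (by omega)
      have hm := F_mono hle
      rw [valFc_cons0, valFc_cons0]
      have : valF t < valF t' := by omega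
      omega
    · rw [valFc_cons0, valFc_cons0]
      have := valF_lt_of_lex _ _ (hu.good) (hv.good) hlen hlex
      simp only [valF, Nat.zero_mul, Nat.zero_add] at this
      omega
  · -- both head 1
    rcases inD_struct hu with ⟨t, rfl⟩|rfl|⟨s, rfl⟩
    · simp at h1
    · -- u = [1]
      rcases inD_struct hv with ⟨t, rfl⟩|rfl|⟨t, rfl⟩
      · simp at h2
      · -- v = [1] : contradiction
        exfalso
        rcases hrev with hlen | ⟨-, hlex⟩
        · simp at hlen
        · exact absurd (lex_cons_same hlex) (by intro h; cases h)
      · -- [1] vs 100t : revLt means t longer?? contradiction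
        exfalso
        rcases hrev with hlen | ⟨hlen, hlex⟩
        · simp at hlen
        · simp at hlen
    · rcases inD_struct hv with ⟨t, rfl⟩|rfl|⟨t, rfl⟩
      · simp at h2
      · -- u = 100s, v = [1]
        have := valFc_neg2_of_100 hu
        rw [valFc_one]
        omega
      · -- u = 100s, v = 100t
        rcases hrev with hlen | ⟨hlen, hlex⟩
        · simp only [List.length_cons] at hlen
          have hodd1 := inD_odd hu
          have hodd2 := inD_odd hv
          simp only [List.length_cons] at hodd1 hodd2
          have hle : t.length + 2 ≤ s.length := by
            rcases hodd1 with ⟨k, hk⟩; rcases hodd2 with ⟨k', hk'⟩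
            omega
          rw [valFc_100, valFc_100]
          have hb1 : valF s < F s.length := valF_lt s (goodW_of_100 hu)
          have hrec : F (s.length + 1) = F s.length + F (s.length - 1) := by
            have := F_add_two (s.length - 1)
            have e1 : s.length - 1 + 2 = s.length + 1 := by omega
            have e2 : s.length - 1 + 1 = s.length := by omega
            rw [e1, e2] at this
            omega
          have hm : F (t.length + 1) ≤ F (s.length - 1) := F_mono (by omega)
          have hb2 : (0:ℤ) ≤ valF t := by positivity
          omega
        · simp only [List.length_cons] at hlen
          have hslen : s.length = t.length := by omega
          have hlex' : List.Lex (· < ·) s t :=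
            lex_cons_same (lex_cons_same (lex_cons_same hlex))
          have := valF_lt_of_lex s t (goodW_of_100 hu) (goodW_of_100 hv) hslen hlex'
          rw [valFc_100, valFc_100, hslen]
          omega

lemma head01 {u : List ℕ} (hu : inD u) : u.headD 0 = 0 ∨ u.headD 0 = 1 := by
  rcases inD_struct hu with ⟨t, rfl⟩|rfl|⟨s, rfl⟩ <;> simp

lemma precLt_total {u v : List ℕ} (hu : inD u) (hv : inD v) (hne : u ≠ v) :
    precLt u v ∨ precLt v u := by
  have hlex := lex_trichotomy u v
  rcases head01 hu with h1|h1 <;> rcases head01 hv with h2|h2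
  · rcases lt_trichotomy u.length v.length with h|h|h
    · exact Or.inl (Or.inr (Or.inl ⟨h1, h2, Or.inl h⟩))
    · rcases hlex with h'|h'|h'
      · exact absurd h' hne
      · exact Or.inl (Or.inr (Or.inl ⟨h1, h2, Or.inr ⟨h, h'⟩⟩))
      · exact Or.inr (Or.inr (Or.inl ⟨h2, h1, Or.inr ⟨h.symm, h'⟩⟩))
    · exact Or.inr (Or.inr (Or.inl ⟨h2, h1, Or.inl h⟩))
  · exact Or.inr (Or.inl ⟨h2, h1⟩)
  · exact Or.inl (Or.inl ⟨h1, h2⟩)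
  · rcases lt_trichotomy u.length v.length with h|h|h
    · exact Or.inr (Or.inr (Or.inr ⟨h2, h1, Or.inl h⟩))
    · rcases hlex with h'|h'|h'
      · exact absurd h' hne
      · exact Or.inl (Or.inr (Or.inr ⟨h1, h2, Or.inr ⟨h, h'⟩⟩))
      · exact Or.inr (Or.inr (Or.inr ⟨h2, h1, Or.inr ⟨h.symm, h'⟩⟩))
    · exact Or.inl (Or.inr (Or.inr ⟨h1, h2, Or.inl h⟩))

lemma valFc_injOn {u v : List ℕ} (hu : inD u) (hv : inD v) (h : valFc u = valFc v) : u = v := by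
  by_contra hne
  rcases precLt_total hu hv hne with h'|h'
  · exact absurd h (ne_of_lt (valFc_lt_of_precLt hu hv h'))
  · exact absurd h.symm (ne_of_lt (valFc_lt_of_precLt hv hu h'))

lemma precLt_of_valFc_lt {u v : List ℕ} (hu : inD u) (hv : inD v) (h : valFc u < valFc v) :
    precLt u v := by
  rcases eq_or_ne u v with rfl|hne
  · exact absurd h (lt_irrefl _)
  rcases precLt_total hu hv hne with h'|h'
  · exact h'
  · exact absurd (valFc_lt_of_precLt hv hu h') (by omega)
lemma zeck_head1 {m n : ℕ} (h : ¬ n < F m) : zeck (m+1) n = 1 :: zeck m (n - F m) := by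
  simp [zeck, h]

lemma inD_zero : inD [0] := by
  refine ⟨by simp, by decide, ?_, ?_, ?_⟩ <;> decide

lemma inD_cons_pad {z : List ℕ} (hz : GoodW z) (hh : ∃ t, z = 1 :: t) :
    (Even z.length → inD (0 :: z)) ∧ (Odd z.length → inD (0 :: 0 :: z)) := by
  obtain ⟨t, rfl⟩ := hh
  constructor
  · intro hev
    refine ⟨?_, ?_, ?_, ?_, ?_⟩
    · intro x hx
      rcases List.mem_cons.1 hx with h'|h'
      · omega
      · exact hz.1 x h'
    · simpa [List.length_cons, Nat.even_add_one, Nat.odd_add_one] using hev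
    · intro hc
      rcases List.infix_cons_iff.1 hc with h'|h'
      · rw [List.cons_prefix_cons] at h'; omega
      · exact hz.2 h'
    · intro hc
      rw [List.cons_prefix_cons, List.cons_prefix_cons] at hc; omega
    · intro hc
      rw [List.cons_prefix_cons] at hc; omega
  · intro hodd
    refine ⟨?_, ?_, ?_, ?_, ?_⟩
    · intro x hx
      rcases List.mem_cons.1 hx with h'|h'
      · omega
      rcases List.mem_cons.1 h' with h''|h''
      · omega
      · exact hz.1 x h''
    · rcases hodd with ⟨k, hk⟩
      simp only [List.length_cons] at hk ⊢
      exact ⟨k+1, by omega⟩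
    · intro hc
      rcases List.infix_cons_iff.1 hc with h'|h'
      · rw [List.cons_prefix_cons] at h'; omega
      rcases List.infix_cons_iff.1 h' with h''|h''
      · rw [List.cons_prefix_cons] at h''; omega
      · exact hz.2 h''
    · intro hc
      rw [List.cons_prefix_cons, List.cons_prefix_cons, List.cons_prefix_cons] at hc
      omega
    · intro hc
      rw [List.cons_prefix_cons] at hc; omega

lemma exists_rep_nonneg (n : ℕ) : ∃ w, inD w ∧ valFc w = (n : ℤ) := by
  rcases Nat.eq_zero_or_pos n with rfl|hn
  · exact ⟨[0], inD_zero, by decide⟩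
  · -- find m with F m ≤ n < F (m+1)
    have hex : ∃ k, n < F k := ⟨n, by have := le_F n; omega⟩
    obtain ⟨k₀, hk, hminp⟩ : ∃ k₀, n < F k₀ ∧ ∀ j, j < k₀ → ¬ n < F j :=
      ⟨Nat.find hex, Nat.find_spec hex, fun j hj => Nat.find_min hex hj⟩
    have hF0 : F 0 = 1 := by decide
    have hk0ne : k₀ ≠ 0 := by
      intro h
      rw [h, hF0] at hk
      omega
    obtain ⟨m, rfl⟩ : ∃ m, k₀ = m + 1 := ⟨k₀ - 1, by omega⟩
    have hge : ¬ n < F m := hminp m (by omega)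
    have hzeq := zeck_head1 hge
    obtain ⟨hgood, hval⟩ := zeck_spec (m+1) n hk
    have hlen : (zeck (m+1) n).length = m + 1 := zeck_length _ _
    have hpad := inD_cons_pad hgood ⟨_, hzeq⟩
    rcases Nat.even_or_odd (m+1) with hev|hodd
    · refine ⟨0 :: zeck (m+1) n, hpad.1 (by rw [hlen]; exact hev), ?_⟩
      rw [valFc_cons0, hval]
    · refine ⟨0 :: 0 :: zeck (m+1) n, hpad.2 (by rw [hlen]; exact hodd), ?_⟩
      rw [valFc_cons0]
      simp only [valF, Nat.zero_mul, Nat.zero_add, hval]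

lemma inD_100 {s : List ℕ} (hs : GoodW s) (hev : Even s.length) : inD (1 :: 0 :: 0 :: s) := by
  refine ⟨?_, ?_, ?_, ?_, ?_⟩
  · intro x hx
    simp only [List.mem_cons] at hx
    rcases hx with rfl|rfl|rfl|h'
    · omega
    · omega
    · omega
    · exact hs.1 x h'
  · rcases hev with ⟨k, hk⟩
    simp only [List.length_cons] at hk ⊢
    exact ⟨k+1, by omega⟩
  · intro hc
    rcases List.infix_cons_iff.1 hc with h'|h'
    · rw [List.cons_prefix_cons, List.cons_prefix_cons] at h'; omega
    rcases List.infix_cons_iff.1 h' with h''|h''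
    · rw [List.cons_prefix_cons] at h''; omega
    rcases List.infix_cons_iff.1 h'' with h3|h3
    · rw [List.cons_prefix_cons] at h3; omega
    · exact hs.2 h3
  · intro hc
    rw [List.cons_prefix_cons] at hc; omega
  · intro hc
    rw [List.cons_prefix_cons, List.cons_prefix_cons, List.cons_prefix_cons] at hc
    omega

lemma exists_rep_neg (n : ℕ) (hn : 1 ≤ n) : ∃ w, inD w ∧ valFc w = -(n : ℤ) := by
  rcases Nat.lt_or_ge n 3 with h3|h3
  · interval_cases n
    · exact ⟨[1], ⟨by decide, by decide, by decide, by decide, by decide⟩, by decide⟩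
    · exact ⟨[1,0,0], ⟨by decide, by decide, by decide, by decide, by decide⟩, by decide⟩
  · -- minimal k with n ≤ F k
    have hex : ∃ k, n ≤ F k := ⟨n, by have := le_F n; omega⟩
    obtain ⟨k₀, hk, hminp⟩ : ∃ k₀, n ≤ F k₀ ∧ ∀ j, j < k₀ → ¬ n ≤ F j :=
      ⟨Nat.find hex, Nat.find_spec hex, fun j hj => Nat.find_min hex hj⟩
    have hF0 : F 0 = 1 := by decide
    have hF1 : F 1 = 2 := by decide
    have hk2 : 2 ≤ k₀ := by
      by_contra h
      push_neg at h
      interval_cases k₀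
      · exact absurd hk (by omega)
      · exact absurd hk (by omega)
    have hmin : ¬ n ≤ F (k₀ - 1) := hminp _ (by omega)
    -- choose even j with F (j-1) < n ≤ F (j+1)
    obtain ⟨j, hj2, hjev, hjl, hju⟩ :
        ∃ j, 2 ≤ j ∧ j % 2 = 0 ∧ F (j - 1) < n ∧ n ≤ F (j + 1) := by
      rcases Nat.even_or_odd k₀ with hev|hodd
      · refine ⟨k₀, hk2, ?_, by omega, le_trans hk (F_mono (by omega))⟩
        rcases hev with ⟨k, hk'⟩; omega
      · refine ⟨k₀ - 1, by rcases hodd with ⟨k, hk'⟩; omega, ?_, ?_, ?_⟩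
        · rcases hodd with ⟨k, hk'⟩; omega
        · have : F (k₀ - 1 - 1) ≤ F (k₀ - 1) := F_mono (by omega)
          omega
        · rw [show k₀ - 1 + 1 = k₀ by omega]; exact hk
      
    have hrec : F (j + 1) = F j + F (j - 1) := by
      have := F_add_two (j - 1)
      have e1 : j - 1 + 2 = j + 1 := by omega
      have e2 : j - 1 + 1 = j := by omega
      rw [e1, e2] at this
      omega
    have hlt : F (j + 1) - n < F j := by omega
    obtain ⟨hgood, hval⟩ := zeck_spec j (F (j+1) - n) hlt
    have hlen := zeck_length j (F (j+1) - n)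
    refine ⟨1 :: 0 :: 0 :: zeck j (F (j+1) - n), inD_100 hgood (by rw [hlen]; exact ⟨j/2, by omega⟩), ?_⟩
    rw [valFc_100, hval, hlen]
    have : (0:ℤ) ≤ F (j+1) := by positivity
    omega

lemma exists_rep (n : ℤ) : ∃ w, inD w ∧ valFc w = n := by
  rcases Int.eq_nat_or_neg n with ⟨m, rfl|rfl⟩
  · exact exists_rep_nonneg m
  · rcases Nat.eq_zero_or_pos m with rfl|hm
    · simpa using exists_rep_nonneg 0
    · exact exists_rep_neg m hm

-- integer fixpoint lemma
lemma strictMono_int_step {φ : ℤ → ℤ} (h : StrictMono φ) :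
    ∀ (d : ℕ) (m : ℤ), φ m + d ≤ φ (m + d) := by
  intro d
  induction d with
  | zero => intro m; simp
  | succ d ih =>
      intro m
      have h1 := ih m
      have h2 : φ (m + d) < φ (m + d + 1) := h (by omega)
      rw [Nat.cast_add, Nat.cast_one]
      have e : m + ((d:ℤ) + 1) = m + d + 1 := by ring
      rw [e]
      omega

lemma strictMono_int_ge {φ : ℤ → ℤ} (h : StrictMono φ) (h0 : φ 0 = 0) (n : ℤ) :
    (0 ≤ n → n ≤ φ n) ∧ (n ≤ 0 → φ n ≤ n) := by
  constructor
  · intro hn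
    have := strictMono_int_step h n.toNat 0
    rw [Int.toNat_of_nonneg hn, h0, zero_add] at this
    omega
  · intro hn
    have := strictMono_int_step h (-n).toNat n
    rw [show n + ((-n).toNat : ℤ) = 0 by omega, h0] at this
    omega

lemma int_fix {φ : ℤ → ℤ} (h : StrictMono φ) (hs : Function.Surjective φ)
    (h0 : φ 0 = 0) (n : ℤ) : φ n = n := by
  set ψ := Function.surjInv hs with hψ
  have hψs : ∀ x, φ (ψ x) = x := Function.surjInv_eq hs
  have hψmono : StrictMono ψ := by
    intro a b hab
    by_contra hc
    have : ψ b ≤ ψ a := by omega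
    have := h.monotone this
    rw [hψs a, hψs b] at this
    omega
  have hψ0 : ψ 0 = 0 := by
    have : φ (ψ 0) = φ 0 := by rw [hψs, h0]
    exact h.injective this
  have hψn : ψ (φ n) = n := h.injective (by rw [hψs])
  have H1 := strictMono_int_ge h h0 n
  have H2 := strictMono_int_ge hψmono hψ0 (φ n)
  rcases le_or_gt 0 n with hn|hn
  · have e1 : n ≤ φ n := H1.1 hn
    have e2 : φ n ≤ ψ (φ n) := H2.1 (by omega)
    omega
  · have e1 : φ n ≤ n := H1.2 (by omega)
    have e2 : ψ (φ n) ≤ φ n := H2.2 (by omega)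
    omega
theorem repFc_characterization (f : ℤ → List ℕ) :
    (Set.BijOn f Set.univ {w : List ℕ | inD w} ∧
      (∀ m n : ℤ, m < n → precLt (f m) (f n)) ∧ f 0 = [0]) ↔
    (∀ n : ℤ, inD (f n) ∧ valFc (f n) = n) := by
  constructor
  · rintro ⟨hbij, hmono, h0⟩
    have hmem : ∀ n : ℤ, inD (f n) := fun n => hbij.1 (Set.mem_univ n)
    have hφmono : StrictMono (fun n => valFc (f n)) := fun m n h =>
      valFc_lt_of_precLt (hmem m) (hmem n) (hmono m n h)
    have hφ0 : valFc (f 0) = 0 := by rw [h0]; decide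
    have hφsurj : Function.Surjective (fun n => valFc (f n)) := by
      intro n
      obtain ⟨w, hw, hwv⟩ := exists_rep n
      obtain ⟨m, -, hm⟩ := hbij.2.2 hw
      exact ⟨m, by simp only; rw [hm, hwv]⟩
    intro n
    exact ⟨hmem n, int_fix hφmono hφsurj hφ0 n⟩
  · intro h
    refine ⟨⟨?_, ?_, ?_⟩, ?_, ?_⟩
    · intro n _
      exact (h n).1
    · intro a _ b _ hab
      have ha := (h a).2
      have hb := (h b).2
      rw [hab] at ha
      omega
    · intro w hw
      refine ⟨valFc w, Set.mem_univ _, ?_⟩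
      exact valFc_injOn (h _).1 hw (h (valFc w)).2
    · intro m n hmn
      apply precLt_of_valFc_lt (h m).1 (h n).1
      rw [(h m).2, (h n).2]
      exact hmn
    · refine valFc_injOn (h 0).1 inD_zero ?_
      rw [(h 0).2]
      decide
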